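/- Strong duality for discrete optimal stopping: for every 𝓕-martingale M and every 0 ≤ n ≤ N, Y*_n ≤ 𝔼[ max_{n ≤ m ≤ N} (G_m − M_m + M_n) | 𝓕_n ] ℙ-a.s., and for the Doob martingale M* of the Snell envelope equality holds: Y*_n = 𝔼[ max_{n ≤ m ≤ N} (G_m − M*_m + M*_n) | 𝓕_n ] ℙ-a.s.; hence the conditional infimum of the dual upper bounds over all 𝓕-martingales equals the Snell envelope and is attained. -/

import Mathlib

open MeasureTheory Filter

/-- A finite-horizon martingale with respect to the filtration `ℱ` up to time `N`:
an adapted, integrable process with the one-step martingale property. -/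
def IsFinMartingale {Ω : Type*} {m0 : MeasurableSpace Ω} (μ : Measure Ω)
    (ℱ : Filtration ℕ m0) (N : ℕ) (M : ℕ → Ω → ℝ) : Prop :=
  (∀ n, n ≤ N → StronglyMeasurable[ℱ n] (M n)) ∧
  (∀ n, n ≤ N → Integrable (M n) μ) ∧
  ∀ n, n < N → μ[M (n + 1)|ℱ n] =ᵐ[μ] M n

namespace StrongDualityAux

/-- Downward induction from `N`. -/
lemma rev_induction (N : ℕ) (P : ℕ → Prop) (base : P N)
    (step : ∀ k, k < N → P (k + 1) → P k) : ∀ k, k ≤ N → P k := by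
  have H : ∀ d k, k + d = N → P k := by
    intro d
    induction d with
    | zero =>
        intro k h
        have hk : k = N := by omega
        subst hk; exact base
    | succ d ih =>
        intro k h
        exact step k (by omega) (ih (k + 1) (by omega))
  intro k hk
  exact H (N - k) k (by omega)

lemma integrable_sup' {Ω : Type*} {m0 : MeasurableSpace Ω} {μ : Measure Ω}
    (s : Finset ℕ) (hs : s.Nonempty) (f : ℕ → Ω → ℝ)
    (hf : ∀ i ∈ s, Integrable (f i) μ) :
    Integrable (fun ω => s.sup' hs (fun i => f i ω)) μ := by
  induction hs using Finset.Nonempty.cons_induction with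
  | singleton a =>
      simp only [Finset.sup'_singleton]
      exact hf a (Finset.mem_singleton_self a)
  | cons a s ha hs ih =>
      have he : (fun ω => (Finset.cons a s ha).sup' (Finset.cons_nonempty ha) fun i => f i ω)
          = fun ω => f a ω ⊔ s.sup' hs (fun i => f i ω) :=
        funext fun ω => Finset.sup'_cons hs (fun i => f i ω)
      rw [he]
      exact (hf a (by simp)).sup (ih fun i hi => hf i (by simp [hi]))

lemma icc_top_split {k : ℕ} :
    Finset.Icc 1 (k + 1) = insert (k + 1) (Finset.Icc 1 k) := by
  ext x
  simp only [Finset.mem_Icc, Finset.mem_insert]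
  omega

lemma sup'_Icc_split {N k : ℕ} (hk : k ≤ N) (hk1 : k + 1 ≤ N) (f : ℕ → ℝ) :
    (Finset.Icc k N).sup' (Finset.nonempty_Icc.mpr hk) f =
      max (f k) ((Finset.Icc (k + 1) N).sup' (Finset.nonempty_Icc.mpr hk1) f) := by
  apply le_antisymm
  · apply Finset.sup'_le
    intro m hm
    rw [Finset.mem_Icc] at hm
    rcases eq_or_lt_of_le hm.1 with h | h
    · rw [← h]; exact le_max_left _ _
    · exact le_max_of_le_right (Finset.le_sup' f (by rw [Finset.mem_Icc]; omega))
  · rw [max_le_iff]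
    refine ⟨Finset.le_sup' f (by rw [Finset.mem_Icc]; omega), Finset.sup'_le _ _ ?_⟩
    intro m hm
    rw [Finset.mem_Icc] at hm
    exact Finset.le_sup' f (by rw [Finset.mem_Icc]; omega)

end StrongDualityAux

open StrongDualityAux

/-- Strong duality: for every martingale `M` and every `n ≤ N`, a.s.
`Y n ≤ 𝔼[max_{n ≤ m ≤ N} (G m − M m + M n) | ℱ n]`, and for the Doob martingale
`Mstar` of the Snell envelope equality holds a.s.; hence the conditional infimum
of the dual upper bounds over all martingales equals the Snell envelope and is
attained. -/
theorem strong_duality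
    {Ω : Type*} {m0 : MeasurableSpace Ω} {μ : Measure Ω} [IsProbabilityMeasure μ]
    (N : ℕ) (hN : 1 ≤ N) (ℱ : Filtration ℕ m0)
    (G : ℕ → Ω → ℝ) (hGadapted : Adapted ℱ G) (hGint : ∀ n, Integrable (G n) μ)
    (Y : ℕ → Ω → ℝ)
    (hYN : ∀ ω, Y N ω = G N ω)
    (hYrec : ∀ n, n < N → ∀ ω, Y n ω = max (G n ω) ((μ[Y (n + 1)|ℱ n]) ω))
    (Mstar : ℕ → Ω → ℝ)
    (hMstar : ∀ n ω, Mstar n ω = ∑ m ∈ Finset.Icc 1 n, (Y m ω - (μ[Y m|ℱ (m - 1)]) ω))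
    (n : ℕ) (hn : n ≤ N) :
    (∀ M : ℕ → Ω → ℝ, IsFinMartingale μ ℱ N M →
      Y n ≤ᵐ[μ]
        μ[fun ω => (Finset.Icc n N).sup' (Finset.nonempty_Icc.mpr hn)
          (fun m => G m ω - M m ω + M n ω)|ℱ n]) ∧
    Y n =ᵐ[μ]
      μ[fun ω => (Finset.Icc n N).sup' (Finset.nonempty_Icc.mpr hn)
        (fun m => G m ω - Mstar m ω + Mstar n ω)|ℱ n] := by
  -- measurability and integrability of the Snell envelope
  have hYmi : ∀ k, k ≤ N → StronglyMeasurable[ℱ k] (Y k) ∧ Integrable (Y k) μ := by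
    refine rev_induction N _ ?_ ?_
    · have hYG : Y N = G N := funext hYN
      rw [hYG]
      exact ⟨(hGadapted N).stronglyMeasurable, hGint N⟩
    · intro k hk _
      have hYk : Y k = fun ω => max (G k ω) ((μ[Y (k + 1)|ℱ k]) ω) := funext (hYrec k hk)
      rw [hYk]
      exact ⟨((Measurable.max (hGadapted k) stronglyMeasurable_condExp.measurable)).stronglyMeasurable,
        (hGint k).sup integrable_condExp⟩
  have hYsm : ∀ k, k ≤ N → StronglyMeasurable[ℱ k] (Y k) := fun k hk => (hYmi k hk).1
  have hYint : ∀ k, k ≤ N → Integrable (Y k) μ := fun k hk => (hYmi k hk).2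
  -- Part 1: the weak duality bound, in separated form
  have part1 : ∀ M : ℕ → Ω → ℝ, IsFinMartingale μ ℱ N M →
      ∀ k, k ≤ N → ∀ hk : k ≤ N,
      Y k ≤ᵐ[μ] fun ω =>
        (μ[fun ω' => (Finset.Icc k N).sup' (Finset.nonempty_Icc.mpr hk)
          (fun m => G m ω' - M m ω')|ℱ k]) ω + M k ω := by
    rintro M ⟨Msm, Mint, Mmart⟩
    refine rev_induction N _ ?_ ?_
    · intro hk
      have hZ : (fun ω' => (Finset.Icc N N).sup' (Finset.nonempty_Icc.mpr hk)
          (fun m => G m ω' - M m ω')) = fun ω' => G N ω' - M N ω' := by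
        funext ω'
        simp [Finset.Icc_self]
      rw [hZ]
      have hce : (μ[fun ω' => G N ω' - M N ω'|ℱ N]) = fun ω' => G N ω' - M N ω' :=
        condExp_of_stronglyMeasurable (ℱ.le N)
          ((hGadapted N).stronglyMeasurable.sub (Msm N le_rfl)) ((hGint N).sub (Mint N le_rfl))
      rw [hce]
      filter_upwards with ω
      rw [hYN ω]
      simp
    · intro k hkN IH hk
      have hk1 : k + 1 ≤ N := hkN
      set Z : Ω → ℝ := fun ω' => (Finset.Icc k N).sup' (Finset.nonempty_Icc.mpr hk)
        (fun m => G m ω' - M m ω') with hZdef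
      set Z1 : Ω → ℝ := fun ω' => (Finset.Icc (k + 1) N).sup' (Finset.nonempty_Icc.mpr hk1)
        (fun m => G m ω' - M m ω') with hZ1def
      have hZint : Integrable Z μ := by
        refine integrable_sup' _ _ _ fun i hi => ?_
        rw [Finset.mem_Icc] at hi
        exact (hGint i).sub (Mint i hi.2)
      have hZ1int : Integrable Z1 μ := by
        refine integrable_sup' _ _ _ fun i hi => ?_
        rw [Finset.mem_Icc] at hi
        exact (hGint i).sub (Mint i hi.2)
      have hsplit : ∀ ω, Z ω = max (G k ω - M k ω) (Z1 ω) := fun ω =>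
        sup'_Icc_split hk hk1 (fun m => G m ω - M m ω)
      -- first bound : G k - M k ≤ μ[Z | ℱ k]
      have h1 : ∀ᵐ ω ∂μ, G k ω - M k ω ≤ (μ[Z|ℱ k]) ω := by
        have hle : (G k - M k : Ω → ℝ) ≤ᵐ[μ] Z := by
          filter_upwards with ω
          rw [Pi.sub_apply, hsplit ω]
          exact le_max_left _ _
        have h := condExp_mono ((hGint k).sub (Mint k hk)) hZint hle (m := ℱ k)
        have hce : (μ[G k - M k|ℱ k]) = G k - M k :=
          condExp_of_stronglyMeasurable (ℱ.le k)
            ((hGadapted k).stronglyMeasurable.sub (Msm k hk)) ((hGint k).sub (Mint k hk))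
        rw [hce] at h
        filter_upwards [h] with ω hω
        simpa using hω
      -- second bound : μ[Y (k+1)|ℱ k] - M k ≤ μ[Z | ℱ k]
      have h2 : ∀ᵐ ω ∂μ, (μ[Y (k + 1)|ℱ k]) ω - M k ω ≤ (μ[Z|ℱ k]) ω := by
        have hIH : (Y (k + 1) - M (k + 1) : Ω → ℝ) ≤ᵐ[μ] μ[Z1|ℱ (k + 1)] := by
          filter_upwards [IH hk1] with ω hω
          rw [← hZ1def] at hω
          rw [Pi.sub_apply]
          linarith
        have hmono1 : μ[Y (k + 1) - M (k + 1)|ℱ k] ≤ᵐ[μ] μ[μ[Z1|ℱ (k + 1)]|ℱ k] :=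
          condExp_mono ((hYint (k + 1) hk1).sub (Mint (k + 1) hk1))
            integrable_condExp hIH
        have htower : μ[μ[Z1|ℱ (k + 1)]|ℱ k] =ᵐ[μ] μ[Z1|ℱ k] :=
          condExp_condExp_of_le (ℱ.mono (Nat.le_succ k)) (ℱ.le (k + 1))
        have hmono2 : μ[Z1|ℱ k] ≤ᵐ[μ] μ[Z|ℱ k] := by
          refine condExp_mono hZ1int hZint ?_
          filter_upwards with ω
          rw [hsplit ω]
          exact le_max_right _ _
        have hsub : μ[Y (k + 1) - M (k + 1)|ℱ k] =ᵐ[μ]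
            μ[Y (k + 1)|ℱ k] - μ[M (k + 1)|ℱ k] :=
          condExp_sub (hYint (k + 1) hk1) (Mint (k + 1) hk1) (m := ℱ k)
        have hmartk := Mmart k hkN
        filter_upwards [hmono1, htower, hmono2, hsub, hmartk] with ω e1 e2 e3 e4 e5
        have e4' : (μ[Y (k + 1) - M (k + 1)|ℱ k]) ω =
            (μ[Y (k + 1)|ℱ k]) ω - (μ[M (k + 1)|ℱ k]) ω := e4
        have e5' : (μ[M (k + 1)|ℱ k]) ω = M k ω := e5
        calc (μ[Y (k + 1)|ℱ k]) ω - M k ω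
            = (μ[Y (k + 1)|ℱ k]) ω - (μ[M (k + 1)|ℱ k]) ω := by rw [e5']
          _ = (μ[Y (k + 1) - M (k + 1)|ℱ k]) ω := e4'.symm
          _ ≤ (μ[μ[Z1|ℱ (k + 1)]|ℱ k]) ω := e1
          _ = (μ[Z1|ℱ k]) ω := e2
          _ ≤ (μ[Z|ℱ k]) ω := e3
      filter_upwards [h1, h2] with ω e1 e2
      rw [hYrec k hkN ω, max_le_iff]
      constructor <;> linarith
  -- the general bound in the statement's form
  have mainbound : ∀ M : ℕ → Ω → ℝ, IsFinMartingale μ ℱ N M →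
      Y n ≤ᵐ[μ]
        μ[fun ω => (Finset.Icc n N).sup' (Finset.nonempty_Icc.mpr hn)
          (fun m => G m ω - M m ω + M n ω)|ℱ n] := by
    intro M hM
    obtain ⟨Msm, Mint, Mmart⟩ := hM
    have hfun : (fun ω => (Finset.Icc n N).sup' (Finset.nonempty_Icc.mpr hn)
        (fun m => G m ω - M m ω + M n ω)) =
        (fun ω => (Finset.Icc n N).sup' (Finset.nonempty_Icc.mpr hn)
          (fun m => G m ω - M m ω)) + M n := by
      funext ω
      exact (Finset.comp_sup'_eq_sup'_comp (Finset.nonempty_Icc.mpr hn)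
        (fun x => x + M n ω) (fun x y => (max_add_add_right x y (M n ω)).symm)).symm
    have hZint : Integrable (fun ω => (Finset.Icc n N).sup' (Finset.nonempty_Icc.mpr hn)
        (fun m => G m ω - M m ω)) μ := by
      refine integrable_sup' _ _ _ fun i hi => ?_
      rw [Finset.mem_Icc] at hi
      exact (hGint i).sub (Mint i hi.2)
    have hadd := condExp_add hZint (Mint n hn) (m := ℱ n)
    have hMce : (μ[M n|ℱ n]) = M n :=
      condExp_of_stronglyMeasurable (ℱ.le n) (Msm n hn) (Mint n hn)
    have hp1 := part1 M ⟨Msm, Mint, Mmart⟩ n hn hn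
    rw [hfun]
    filter_upwards [hp1, hadd] with ω e1 e2
    have e2' : (μ[(fun ω => (Finset.Icc n N).sup' (Finset.nonempty_Icc.mpr hn)
          (fun m => G m ω - M m ω)) + M n|ℱ n]) ω =
        (μ[fun ω' => (Finset.Icc n N).sup' (Finset.nonempty_Icc.mpr hn)
          (fun m => G m ω' - M m ω')|ℱ n]) ω + (μ[M n|ℱ n]) ω := e2
    rw [e2', hMce]
    exact e1
  refine ⟨mainbound, ?_⟩
  -- Mstar is a finite-horizon martingale
  have hMstarStep : ∀ k ω, Mstar (k + 1) ω =
      Mstar k ω + (Y (k + 1) ω - (μ[Y (k + 1)|ℱ k]) ω) := by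
    intro k ω
    rw [hMstar, hMstar, icc_top_split, Finset.sum_insert (by simp)]
    simp [add_comm]
  have hMstarSm : ∀ k, k ≤ N → StronglyMeasurable[ℱ k] (Mstar k) := by
    intro k hk
    have hM : Mstar k = fun ω => ∑ m ∈ Finset.Icc 1 k, (Y m ω - (μ[Y m|ℱ (m - 1)]) ω) :=
      funext (hMstar k)
    rw [hM]
    apply Finset.stronglyMeasurable_fun_sum
    intro m hm
    rw [Finset.mem_Icc] at hm
    exact ((hYsm m (hm.2.trans hk)).mono (ℱ.mono hm.2)).sub
      (stronglyMeasurable_condExp.mono (ℱ.mono ((Nat.sub_le m 1).trans hm.2)))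
  have hMstarInt : ∀ k, k ≤ N → Integrable (Mstar k) μ := by
    intro k hk
    have hM : Mstar k = fun ω => ∑ m ∈ Finset.Icc 1 k, (Y m ω - (μ[Y m|ℱ (m - 1)]) ω) :=
      funext (hMstar k)
    rw [hM]
    apply integrable_finset_sum
    intro m hm
    rw [Finset.mem_Icc] at hm
    exact (hYint m (hm.2.trans hk)).sub integrable_condExp
  have hMstarMart : IsFinMartingale μ ℱ N Mstar := by
    refine ⟨hMstarSm, hMstarInt, ?_⟩
    intro k hkN
    have hfe : Mstar (k + 1) = Mstar k + (Y (k + 1) - μ[Y (k + 1)|ℱ k]) := by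
      funext ω
      simpa using hMstarStep k ω
    rw [hfe]
    have hint1 : Integrable (Mstar k) μ := hMstarInt k (le_of_lt hkN)
    have hint2 : Integrable (Y (k + 1) - μ[Y (k + 1)|ℱ k]) μ :=
      (hYint (k + 1) hkN).sub integrable_condExp
    have hadd := condExp_add hint1 hint2 (m := ℱ k)
    have hsub := condExp_sub (hYint (k + 1) hkN)
      (integrable_condExp (f := Y (k + 1)) (m := ℱ k)) (m := ℱ k)
    have hce1 : (μ[Mstar k|ℱ k]) = Mstar k :=
      condExp_of_stronglyMeasurable (ℱ.le k) (hMstarSm k (le_of_lt hkN)) hint1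
    have hce2 : (μ[μ[Y (k + 1)|ℱ k]|ℱ k]) = μ[Y (k + 1)|ℱ k] :=
      condExp_of_stronglyMeasurable (ℱ.le k) stronglyMeasurable_condExp integrable_condExp
    filter_upwards [hadd, hsub] with ω e1 e2
    have e1' : (μ[Mstar k + (Y (k + 1) - μ[Y (k + 1)|ℱ k])|ℱ k]) ω =
        (μ[Mstar k|ℱ k]) ω + (μ[Y (k + 1) - μ[Y (k + 1)|ℱ k]|ℱ k]) ω := e1
    have e2' : (μ[Y (k + 1) - μ[Y (k + 1)|ℱ k]|ℱ k]) ω =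
        (μ[Y (k + 1)|ℱ k]) ω - (μ[μ[Y (k + 1)|ℱ k]|ℱ k]) ω := e2
    rw [e1', e2', hce1, hce2]
    ring
  -- pointwise: the dual payoff for Mstar is bounded by Y n
  have hdecr : ∀ m, n ≤ m → m ≤ N → ∀ ω, Y m ω - Mstar m ω ≤ Y n ω - Mstar n ω := by
    intro m hnm
    induction m, hnm using Nat.le_induction with
    | base => intro _ ω; exact le_rfl
    | succ m hnm IH =>
        intro hmN ω
        have hmN' : m ≤ N := by omega
        have hmltN : m < N := by omega
        have h1 : Y (m + 1) ω - Mstar (m + 1) ω = (μ[Y (m + 1)|ℱ m]) ω - Mstar m ω := by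
          rw [hMstarStep m ω]; ring
        have h2 : (μ[Y (m + 1)|ℱ m]) ω ≤ Y m ω := by
          rw [hYrec m hmltN ω]; exact le_max_right _ _
        calc Y (m + 1) ω - Mstar (m + 1) ω
            = (μ[Y (m + 1)|ℱ m]) ω - Mstar m ω := h1
          _ ≤ Y m ω - Mstar m ω := by linarith
          _ ≤ Y n ω - Mstar n ω := IH hmN' ω
  have hGleY : ∀ m, m ≤ N → ∀ ω, G m ω ≤ Y m ω := by
    intro m hm ω
    rcases lt_or_eq_of_le hm with h | h
    · rw [hYrec m h ω]; exact le_max_left _ _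
    · subst h; rw [hYN ω]
  have hsup_le : ∀ ω, (Finset.Icc n N).sup' (Finset.nonempty_Icc.mpr hn)
      (fun m => G m ω - Mstar m ω + Mstar n ω) ≤ Y n ω := by
    intro ω
    apply Finset.sup'_le
    intro m hm
    rw [Finset.mem_Icc] at hm
    have h1 := hdecr m hm.1 hm.2 ω
    have h2 := hGleY m hm.2 ω
    linarith
  have hsupint : Integrable (fun ω => (Finset.Icc n N).sup' (Finset.nonempty_Icc.mpr hn)
      (fun m => G m ω - Mstar m ω + Mstar n ω)) μ := by
    refine integrable_sup' _ _ _ fun i hi => ?_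
    rw [Finset.mem_Icc] at hi
    exact ((hGint i).sub (hMstarInt i hi.2)).add (hMstarInt n hn)
  have hup := mainbound Mstar hMstarMart
  have hdown : μ[fun ω => (Finset.Icc n N).sup' (Finset.nonempty_Icc.mpr hn)
      (fun m => G m ω - Mstar m ω + Mstar n ω)|ℱ n] ≤ᵐ[μ] Y n := by
    have hmono := condExp_mono hsupint (hYint n hn)
      (Filter.Eventually.of_forall hsup_le) (m := ℱ n)
    have hce : (μ[Y n|ℱ n]) = Y n :=
      condExp_of_stronglyMeasurable (ℱ.le n) (hYsm n hn) (hYint n hn)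
    rwa [hce] at hmono
  exact hup.antisymm hdown
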